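/- For every s₀ ∈ (0, π/2) and every n ∈ ℕ there exists a constant C > 0 such that |(d^n K/dx^n)(x)| ≤ C·exp(−s₀·x) for all x ≥ 1. -/

import Mathlib

open Real

noncomputable def K (x : ℝ) : ℝ :=
  if x = 0 then 0
  else 2 * Real.log (Real.cosh (Real.pi * |x| / 4) / Real.sinh (Real.pi * |x| / 4))

noncomputable def Kp (x : ℝ) : ℝ := ∑' k : ℤ, K (x + 2 * Real.pi * k)

def ProfileSolution (c : ℝ) (φ : ℝ → ℝ) : Prop :=
  Continuous φ ∧ Function.Periodic φ (2 * Real.pi) ∧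
    ∀ x : ℝ, (∫ y in (-Real.pi)..Real.pi, Kp (x - y) * φ y)
      = φ x * (c - φ x / 2) * (c - φ x)

/-- elementary term `a * cosh(πx/2)^p / sinh(πx/2)^q`. -/
noncomputable def tmK (a : ℝ) (p q : ℕ) (x : ℝ) : ℝ :=
  a * Real.cosh (Real.pi * x / 2) ^ p / Real.sinh (Real.pi * x / 2) ^ q

noncomputable def stepK (t : ℝ × ℕ × ℕ) : List (ℝ × ℕ × ℕ) :=
  [(t.1 * t.2.1 * (Real.pi / 2), t.2.1 - 1, t.2.2 - 1),
   (-t.1 * t.2.2 * (Real.pi / 2), t.2.1 + 1, t.2.2 + 1)]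

noncomputable def LK : ℕ → List (ℝ × ℕ × ℕ)
  | 0 => [(-Real.pi, 0, 1)]
  | n + 1 => (LK n).flatMap stepK

noncomputable def GK (n : ℕ) (x : ℝ) : ℝ :=
  ((LK n).map (fun t => tmK t.1 t.2.1 t.2.2 x)).sum

def GoodK (t : ℝ × ℕ × ℕ) : Prop := t.1 = 0 ∨ t.2.1 + 1 ≤ t.2.2

lemma goodK_L : ∀ n, ∀ t ∈ LK n, GoodK t := by
  intro n
  induction n with
  | zero =>
    intro t ht
    simp [LK] at ht
    subst ht
    right; simp
  | succ n ih =>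
    intro t ht
    simp only [LK, List.mem_flatMap] at ht
    obtain ⟨s, hs, hts⟩ := ht
    simp only [stepK, List.mem_cons, List.not_mem_nil, or_false] at hts
    rcases hts with rfl | rfl
    · rcases ih s hs with h0 | hpq
      · left; simp [h0]
      · rcases Nat.eq_zero_or_pos s.2.1 with hp0 | hp1
        · left; simp [hp0]
        · right
          show s.2.1 - 1 + 1 ≤ s.2.2 - 1
          omega
    · rcases ih s hs with h0 | hpq
      · left; simp [h0]
      · right
        show s.2.1 + 1 + 1 ≤ s.2.2 + 1
        omega

lemma tmK_hasDerivAt (a : ℝ) (p q : ℕ) (hg : a = 0 ∨ p + 1 ≤ q) (x : ℝ) (hx : 0 < x) :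
    HasDerivAt (tmK a p q)
      (tmK (a * p * (Real.pi / 2)) (p - 1) (q - 1) x
        + tmK (-a * q * (Real.pi / 2)) (p + 1) (q + 1) x) x := by
  rcases hg with rfl | hpq
  · have : tmK 0 p q = fun _ => (0 : ℝ) := by
      funext y; simp [tmK]
    rw [this]
    have h0 : tmK (0 * (p:ℝ) * (Real.pi / 2)) (p - 1) (q - 1) x
        + tmK (-0 * (q:ℝ) * (Real.pi / 2)) (p + 1) (q + 1) x = 0 := by
      simp [tmK]
    rw [h0]
    exact hasDerivAt_const x 0
  · have hs0 : 0 < Real.sinh (Real.pi * x / 2) :=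
      Real.sinh_pos_iff.mpr (by positivity)
    have hlin : HasDerivAt (fun y : ℝ => Real.pi * y / 2) (Real.pi / 2) x := by
      simpa using ((hasDerivAt_id x).const_mul Real.pi).div_const 2
    have hc := hlin.cosh
    have hs := hlin.sinh
    have hcp := hc.pow p
    have hsq := hs.pow q
    have hd := ((hcp.const_mul a).div hsq (pow_ne_zero q hs0.ne'))
    have hfun : (fun y => a * ((fun x => Real.cosh (Real.pi * x / 2)) ^ p) y)
        / (fun x => Real.sinh (Real.pi * x / 2)) ^ q = tmK a p q := by
      funext y; simp [tmK]
    rw [hfun] at hd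
    refine hd.congr_deriv ?_
    symm
    obtain ⟨q', rfl⟩ : ∃ q', q = q' + 1 := ⟨q - 1, by omega⟩
    set c := Real.cosh (Real.pi * x / 2) with hcdef
    set s := Real.sinh (Real.pi * x / 2) with hsdef
    rcases Nat.eq_zero_or_pos p with rfl | hp1
    · simp only [tmK, Nat.zero_sub, Nat.add_sub_cancel, Nat.cast_zero, pow_zero, Pi.pow_apply]
      field_simp
      ring
    · obtain ⟨p', rfl⟩ : ∃ p', p = p' + 1 := ⟨p - 1, by omega⟩
      simp only [tmK, Nat.add_sub_cancel, Pi.pow_apply]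
      field_simp
      ring

lemma GK_hasDerivAt (n : ℕ) (x : ℝ) (hx : 0 < x) :
    HasDerivAt (GK n) (GK (n + 1) x) x := by
  have key : ∀ l : List (ℝ × ℕ × ℕ), (∀ t ∈ l, GoodK t) →
      HasDerivAt (fun y => (l.map (fun t => tmK t.1 t.2.1 t.2.2 y)).sum)
        (((l.flatMap stepK).map (fun t => tmK t.1 t.2.1 t.2.2 x)).sum) x := by
    intro l
    induction l with
    | nil => intro _; simpa using hasDerivAt_const x (0:ℝ)
    | cons hd tl ih =>
      intro hgood
      have h1 := tmK_hasDerivAt hd.1 hd.2.1 hd.2.2 (hgood hd (by simp)) x hx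
      have h2 := ih (fun t ht => hgood t (by simp [ht]))
      have := h1.add h2
      simp only [List.map_cons, List.sum_cons, List.flatMap_cons, List.map_append,
        List.sum_append, stepK, List.map_nil, List.sum_nil, add_zero]
      exact this
  have := key (LK n) (goodK_L n)
  exact this

lemma K_hasDerivAt (x : ℝ) (hx : 0 < x) :
    HasDerivAt K (GK 0 x) x := by
  have hs0 : 0 < Real.sinh (Real.pi * x / 4) := Real.sinh_pos_iff.mpr (by positivity)
  have hc0 : 0 < Real.cosh (Real.pi * x / 4) := Real.cosh_pos _
  have hlin : HasDerivAt (fun y : ℝ => Real.pi * y / 4) (Real.pi / 4) x := by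
    simpa using ((hasDerivAt_id x).const_mul Real.pi).div_const 4
  have hc := hlin.cosh
  have hs := hlin.sinh
  have hdiv := hc.div hs hs0.ne'
  have hlog := hdiv.log (by simp only [Pi.div_apply]; positivity)
  have hF := hlog.const_mul 2
  have hKF : K =ᶠ[nhds x] (fun y =>
      2 * Real.log (Real.cosh (Real.pi * y / 4) / Real.sinh (Real.pi * y / 4))) := by
    filter_upwards [Ioi_mem_nhds hx] with y hy
    have hy0 : (0:ℝ) < y := hy
    simp [K, hy0.ne', abs_of_pos hy0]
  have hval : 2 * (((Real.sinh (Real.pi * x / 4) * (Real.pi / 4) * Real.sinh (Real.pi * x / 4)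
        - Real.cosh (Real.pi * x / 4) * (Real.cosh (Real.pi * x / 4) * (Real.pi / 4)))
        / Real.sinh (Real.pi * x / 4) ^ 2)
        / (Real.cosh (Real.pi * x / 4) / Real.sinh (Real.pi * x / 4))) = GK 0 x := by
    have hid := Real.cosh_sq_sub_sinh_sq (Real.pi * x / 4)
    have h2 : Real.sinh (Real.pi * x / 2)
        = 2 * Real.sinh (Real.pi * x / 4) * Real.cosh (Real.pi * x / 4) := by
      rw [show Real.pi * x / 2 = 2 * (Real.pi * x / 4) by ring, Real.sinh_two_mul]
    have hnum : Real.sinh (Real.pi * x / 4) * (Real.pi / 4) * Real.sinh (Real.pi * x / 4)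
        - Real.cosh (Real.pi * x / 4) * (Real.cosh (Real.pi * x / 4) * (Real.pi / 4))
        = -(Real.pi / 4) := by
      linear_combination (-(Real.pi / 4)) * hid
    simp only [GK, LK, List.map, List.sum_cons, List.sum_nil, tmK, add_zero, pow_one]
    rw [h2, hnum]
    field_simp
    ring
  have := hF.congr_of_eventuallyEq hKF
  simp only [Pi.div_apply] at this
  rw [hval] at this
  exact this

lemma iterK_eq (n : ℕ) : ∀ x : ℝ, 0 < x → iteratedDeriv (n + 1) K x = GK n x := by
  induction n with
  | zero =>
    intro x hx
    rw [iteratedDeriv_one]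
    exact (K_hasDerivAt x hx).deriv
  | succ n ih =>
    intro x hx
    rw [iteratedDeriv_succ]
    have heq : iteratedDeriv (n + 1) K =ᶠ[nhds x] GK n := by
      filter_upwards [Ioi_mem_nhds hx] with y hy
      exact ih y hy
    rw [heq.deriv_eq]
    exact (GK_hasDerivAt n x hx).deriv

/-- lower bound for sinh. -/
lemma sinh_lb (t : ℝ) (ht : Real.pi / 4 ≤ t) :
    Real.exp t * ((1 - Real.exp (-(Real.pi / 2))) / 2) ≤ Real.sinh t := by
  have h1 : Real.exp (-t) ≤ Real.exp t * Real.exp (-(Real.pi / 2)) := by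
    rw [← Real.exp_add]
    apply Real.exp_le_exp.mpr
    linarith
  rw [Real.sinh_eq]
  linarith

lemma dK_pos : 0 < (1 - Real.exp (-(Real.pi / 2))) / 2 := by
  have : Real.exp (-(Real.pi / 2)) < 1 := Real.exp_lt_one_iff.mpr (neg_lt_zero.mpr (by positivity))
  linarith

lemma tmK_bound (a : ℝ) (p q : ℕ) (hg : a = 0 ∨ p + 1 ≤ q) (s₀ : ℝ)
    (hs₀ : s₀ ≤ Real.pi / 2) (x : ℝ) (hx : 1 ≤ x) :
    |tmK a p q x| ≤ |a| * ((1 - Real.exp (-(Real.pi / 2))) / 2)⁻¹ ^ q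
      * Real.exp (-s₀ * x) := by
  set d := (1 - Real.exp (-(Real.pi / 2))) / 2 with hddef
  have hd := dK_pos
  rcases hg with rfl | hpq
  · simp [tmK]
  · set t := Real.pi * x / 2 with htdef
    have hpix : Real.pi / 4 ≤ t := by
      rw [htdef]
      nlinarith [Real.pi_pos]
    have ht0 : 0 < t := lt_of_lt_of_le (by positivity) hpix
    have hs0 : 0 < Real.sinh t := Real.sinh_pos_iff.mpr ht0
    have hc0 : 0 < Real.cosh t := Real.cosh_pos _
    have habs : |tmK a p q x| = |a| * Real.cosh t ^ p / Real.sinh t ^ q := by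
      rw [tmK, abs_div, abs_mul, abs_of_pos (pow_pos hc0 p), abs_of_pos (pow_pos hs0 q)]
    rw [habs]
    -- cosh t ≤ exp t
    have hcosh_le : Real.cosh t ≤ Real.exp t := by
      rw [Real.cosh_eq]
      have := (Real.exp_le_exp.mpr (by linarith : -t ≤ t))
      linarith
    have hsinh_ge : Real.exp t * d ≤ Real.sinh t := sinh_lb t hpix
    have hed : 0 < Real.exp t * d := by positivity
    have step1 : |a| * Real.cosh t ^ p / Real.sinh t ^ q
        ≤ |a| * Real.exp t ^ p / (Real.exp t * d) ^ q := by
      apply div_le_div₀ (by positivity)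
      · exact mul_le_mul_of_nonneg_left (pow_le_pow_left₀ hc0.le hcosh_le p) (abs_nonneg a)
      · exact pow_pos hed q
      · exact pow_le_pow_left₀ hed.le hsinh_ge q
    refine step1.trans ?_
    have hrw : |a| * Real.exp t ^ p / (Real.exp t * d) ^ q
        = |a| * d⁻¹ ^ q * (Real.exp t ^ p / Real.exp t ^ q) := by
      rw [mul_pow, inv_pow, div_mul_eq_div_div, div_eq_mul_inv (|a| * _)]
      ring
    rw [hrw]
    have hexp : Real.exp t ^ p / Real.exp t ^ q ≤ Real.exp (-s₀ * x) := by
      rw [← Real.exp_nat_mul, ← Real.exp_nat_mul, ← Real.exp_sub]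
      apply Real.exp_le_exp.mpr
      have hq1 : (p : ℝ) + 1 ≤ (q : ℝ) := by exact_mod_cast hpq
      have h1 : (p : ℝ) * t - q * t ≤ -t := by nlinarith
      have h2 : -t ≤ -s₀ * x := by
        rw [htdef]
        nlinarith
      linarith
    calc |a| * d⁻¹ ^ q * (Real.exp t ^ p / Real.exp t ^ q)
        ≤ |a| * d⁻¹ ^ q * Real.exp (-s₀ * x) := by
          apply mul_le_mul_of_nonneg_left hexp (by positivity)
      _ = |a| * d⁻¹ ^ q * Real.exp (-s₀ * x) := rfl

lemma GK_bound (n : ℕ) (s₀ : ℝ) (hs₀ : s₀ ≤ Real.pi / 2) (x : ℝ) (hx : 1 ≤ x) :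
    |GK n x| ≤ ((LK n).map
        (fun t => |t.1| * ((1 - Real.exp (-(Real.pi / 2))) / 2)⁻¹ ^ t.2.2)).sum
      * Real.exp (-s₀ * x) := by
  have key : ∀ l : List (ℝ × ℕ × ℕ), (∀ t ∈ l, GoodK t) →
      |(l.map (fun t => tmK t.1 t.2.1 t.2.2 x)).sum|
        ≤ (l.map (fun t => |t.1| * ((1 - Real.exp (-(Real.pi / 2))) / 2)⁻¹ ^ t.2.2)).sum
          * Real.exp (-s₀ * x) := by
    intro l
    induction l with
    | nil => simp
    | cons hd tl ih =>
      intro hgood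
      simp only [List.map_cons, List.sum_cons]
      calc |tmK hd.1 hd.2.1 hd.2.2 x + (tl.map (fun t => tmK t.1 t.2.1 t.2.2 x)).sum|
          ≤ |tmK hd.1 hd.2.1 hd.2.2 x| + |(tl.map (fun t => tmK t.1 t.2.1 t.2.2 x)).sum| :=
            abs_add_le _ _
        _ ≤ |hd.1| * ((1 - Real.exp (-(Real.pi / 2))) / 2)⁻¹ ^ hd.2.2 * Real.exp (-s₀ * x)
            + (tl.map (fun t => |t.1| * ((1 - Real.exp (-(Real.pi / 2))) / 2)⁻¹ ^ t.2.2)).sum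
              * Real.exp (-s₀ * x) := by
            gcongr ?_ + ?_
            · exact tmK_bound hd.1 hd.2.1 hd.2.2 (hgood hd (by simp)) s₀ hs₀ x hx
            · exact ih (fun t ht => hgood t (by simp [ht]))
        _ = _ := by ring
  exact key (LK n) (goodK_L n)

lemma K_bound (s₀ : ℝ) (hs₀ : s₀ ≤ Real.pi / 2) (x : ℝ) (hx : 1 ≤ x) :
    |K x| ≤ 2 * ((1 - Real.exp (-(Real.pi / 2))) / 2)⁻¹ * Real.exp (-s₀ * x) := by
  set d := (1 - Real.exp (-(Real.pi / 2))) / 2 with hddef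
  have hd := dK_pos
  have hx0 : (0:ℝ) < x := by linarith
  set t := Real.pi * x / 4 with htdef
  have hpit : Real.pi / 4 ≤ t := by
    rw [htdef]; nlinarith [Real.pi_pos]
  have ht0 : 0 < t := lt_of_lt_of_le (by positivity) hpit
  have hs0 : 0 < Real.sinh t := Real.sinh_pos_iff.mpr ht0
  have hc0 : 0 < Real.cosh t := Real.cosh_pos _
  have hcs : Real.sinh t < Real.cosh t := by
    nlinarith [Real.cosh_sub_sinh t, Real.exp_pos (-t)]
  have hKx : K x = 2 * Real.log (Real.cosh t / Real.sinh t) := by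
    simp [K, hx0.ne', abs_of_pos hx0, htdef]
  have hlog_nonneg : 0 ≤ Real.log (Real.cosh t / Real.sinh t) :=
    Real.log_nonneg ((one_le_div hs0).mpr hcs.le)
  have hlog_le : Real.log (Real.cosh t / Real.sinh t) ≤ Real.exp (-t) / Real.sinh t := by
    have h1 := Real.log_le_sub_one_of_pos (show 0 < Real.cosh t / Real.sinh t by positivity)
    have h2 : Real.cosh t / Real.sinh t - 1 = Real.exp (-t) / Real.sinh t := by
      rw [← Real.cosh_sub_sinh t]
      field_simp
    linarith [h1, h2.ge, h2.le]
  have hsinh_ge : Real.exp t * d ≤ Real.sinh t := sinh_lb t hpit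
  have h3 : Real.exp (-t) / Real.sinh t ≤ Real.exp (-t) / (Real.exp t * d) := by
    apply div_le_div_of_nonneg_left (Real.exp_pos _).le (by positivity) hsinh_ge
  have h4 : Real.exp (-t) / (Real.exp t * d) = d⁻¹ * Real.exp (-2 * t) := by
    rw [show (-2:ℝ) * t = -t - t by ring, Real.exp_sub]
    field_simp
  have h5 : Real.exp (-2 * t) ≤ Real.exp (-s₀ * x) := by
    apply Real.exp_le_exp.mpr
    rw [htdef]
    nlinarith
  have habs : |K x| = K x := abs_of_nonneg (by rw [hKx]; positivity)
  rw [habs, hKx]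
  calc 2 * Real.log (Real.cosh t / Real.sinh t)
      ≤ 2 * (Real.exp (-t) / Real.sinh t) := by linarith
    _ ≤ 2 * (Real.exp (-t) / (Real.exp t * d)) := by linarith
    _ = 2 * (d⁻¹ * Real.exp (-2 * t)) := by rw [h4]
    _ ≤ 2 * (d⁻¹ * Real.exp (-s₀ * x)) := by
        have : 0 ≤ d⁻¹ := by positivity
        nlinarith
    _ = 2 * d⁻¹ * Real.exp (-s₀ * x) := by ring

theorem K_derivatives_exponential_decay :
    ∀ s₀ ∈ Set.Ioo (0 : ℝ) (Real.pi / 2), ∀ n : ℕ,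
      ∃ C : ℝ, 0 < C ∧ ∀ x : ℝ, 1 ≤ x →
        |iteratedDeriv n K x| ≤ C * Real.exp (-s₀ * x) := by
  intro s₀ hs₀ n
  have hs₀le : s₀ ≤ Real.pi / 2 := hs₀.2.le
  have hd := dK_pos
  match n with
  | 0 =>
    refine ⟨2 * ((1 - Real.exp (-(Real.pi / 2))) / 2)⁻¹, by positivity, ?_⟩
    intro x hx
    rw [iteratedDeriv_zero]
    exact K_bound s₀ hs₀le x hx
  | n + 1 =>
    set S := ((LK n).map
        (fun t => |t.1| * ((1 - Real.exp (-(Real.pi / 2))) / 2)⁻¹ ^ t.2.2)).sum with hSdef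
    have hS : 0 ≤ S := by
      apply List.sum_nonneg
      intro y hy
      simp only [List.mem_map] at hy
      obtain ⟨t, _, rfl⟩ := hy
      positivity
    refine ⟨S + 1, by linarith, ?_⟩
    intro x hx
    rw [iterK_eq n x (by linarith)]
    calc |GK n x| ≤ S * Real.exp (-s₀ * x) := GK_bound n s₀ hs₀le x hx
      _ ≤ (S + 1) * Real.exp (-s₀ * x) := by
          have := Real.exp_pos (-s₀ * x)
          nlinarith
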